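/- Fix strikes 0 < K_1 < … < K_N and a barrier U > 0. Let σ_* = (σ_{*1}, σ_{*2}) with σ_{*1}, σ_{*2} > 0, let Σ^{σ_*} be the PCLVG implied volatility surface for σ_*, and suppose there is an index i with K_i < U such that the index j̲ = max{ j : U < K_j ≤ U + (U−K_i)·σ_{*2}/σ_{*1} } is well defined. Let T > 0, let S ≥ U, and let Σ : {K_1,…,K_N} × (0,T] → (0,∞) satisfy the lower beliefs generated by Σ^{σ_*} on (0,T]. Then for every τ ∈ (0,T], the risk-reversal portfolio long one call struck at K_{j̲} and short one put struck at K_i has a strictly positive price: C^bs(S, K_{j̲}, τ, Σ(K_{j̲},τ)) − P^bs(S, K_i, τ, Σ(K_i,τ)) > 0. -/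

import Mathlib

open MeasureTheory Filter Set

/-- Standard normal cumulative distribution function. -/
noncomputable def stdNormalCDF (x : ℝ) : ℝ :=
  (Real.sqrt (2 * Real.pi))⁻¹ * ∫ y in Set.Iic x, Real.exp (-(y ^ 2) / 2)

/-- Black–Scholes call price with zero interest and dividend rates. -/
noncomputable def bsCall (S K τ σ : ℝ) : ℝ :=
  let d1 := (Real.log (S / K) + σ ^ 2 * τ / 2) / (σ * Real.sqrt τ)
  S * stdNormalCDF d1 - K * stdNormalCDF (d1 - σ * Real.sqrt τ)

/-- Black–Scholes put price with zero interest and dividend rates. -/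
noncomputable def bsPut (S K τ σ : ℝ) : ℝ := bsCall S K τ σ - S + K

/-- The denominator appearing in the PCLVG call price formula. -/
noncomputable def pclvgD (σ1 σ2 U τ : ℝ) : ℝ :=
  1 / σ1 + 1 / σ2 - (1 / σ2 - 1 / σ1) * Real.exp (-2 * U / (σ1 * τ))

/-- The explicit PCLVG call price `C^σ(U,K,τ)`. -/
noncomputable def pclvgCall (σ1 σ2 U K τ : ℝ) : ℝ :=
  if K < U then
    (U - K) +
      τ * Real.exp (-(U - K) / (σ1 * τ)) * (1 - Real.exp (-2 * K / (σ1 * τ))) /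
        pclvgD σ1 σ2 U τ
  else
    τ * Real.exp (-(K - U) / (σ2 * τ)) * (1 - Real.exp (-2 * U / (σ1 * τ))) /
      pclvgD σ1 σ2 U τ

/-- The PCLVG put price `P^σ(U,K,τ) = C^σ(U,K,τ) − (U − K)`. -/
noncomputable def pclvgPut (σ1 σ2 U K τ : ℝ) : ℝ := pclvgCall σ1 σ2 U K τ - (U - K)

noncomputable def gaussPDF (x : ℝ) : ℝ :=
  (Real.sqrt (2 * Real.pi))⁻¹ * Real.exp (-(x ^ 2) / 2)

lemma gaussPDF_pos (x : ℝ) : 0 < gaussPDF x := by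
  have : 0 < Real.sqrt (2 * Real.pi) := Real.sqrt_pos.2 (by positivity)
  exact mul_pos (inv_pos.2 this) (Real.exp_pos _)

lemma integrable_gauss : Integrable (fun y : ℝ => Real.exp (-(y ^ 2) / 2)) := by
  have h := integrable_exp_neg_mul_sq (by norm_num : (0:ℝ) < 1/2)
  convert h using 2 with y
  ring_nf

lemma hasDerivAt_stdNormalCDF (x : ℝ) : HasDerivAt stdNormalCDF (gaussPDF x) x := by
  set f : ℝ → ℝ := fun y => Real.exp (-(y ^ 2) / 2) with hf
  have hcont : Continuous f := by continuity
  have heq : ∀ z : ℝ, stdNormalCDF z =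
      (Real.sqrt (2 * Real.pi))⁻¹ * ((∫ y in Set.Iic (0:ℝ), f y) + ∫ y in (0:ℝ)..z, f y) := by
    intro z
    have := intervalIntegral.integral_Iic_sub_Iic (integrable_gauss.integrableOn (s := Set.Iic (0:ℝ)))
      (integrable_gauss.integrableOn (s := Set.Iic z))
    unfold stdNormalCDF
    rw [← this]; ring
  have hD : HasDerivAt (fun z => (∫ y in (0:ℝ)..z, f y)) (f x) x :=
    intervalIntegral.integral_hasDerivAt_right integrable_gauss.intervalIntegrable
      (hcont.stronglyMeasurableAtFilter _ _) hcont.continuousAt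
  have : HasDerivAt (fun z => (Real.sqrt (2 * Real.pi))⁻¹ *
      ((∫ y in Set.Iic (0:ℝ), f y) + ∫ y in (0:ℝ)..z, f y))
      ((Real.sqrt (2 * Real.pi))⁻¹ * f x) x :=
    by simpa using ((hasDerivAt_const x ((∫ y in Set.Iic (0:ℝ), f y))).add hD).const_mul (Real.sqrt (2 * Real.pi))⁻¹
  exact (funext heq : stdNormalCDF = _) ▸ this

lemma stdNormalCDF_nonneg (x : ℝ) : 0 ≤ stdNormalCDF x := by
  unfold stdNormalCDF
  have : 0 ≤ ∫ y in Set.Iic x, Real.exp (-(y ^ 2) / 2) :=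
    setIntegral_nonneg measurableSet_Iic fun y _ => (Real.exp_pos _).le
  positivity

lemma stdNormalCDF_le_one (x : ℝ) : stdNormalCDF x ≤ 1 := by
  have h1 : (∫ y in Set.Iic x, Real.exp (-(y ^ 2) / 2)) ≤ ∫ y : ℝ, Real.exp (-(y ^ 2) / 2) :=
    setIntegral_le_integral integrable_gauss (Eventually.of_forall fun y => (Real.exp_pos _).le)
  have h2 : (∫ y : ℝ, Real.exp (-(y ^ 2) / 2)) = Real.sqrt (2 * Real.pi) := by
    have := integral_gaussian (1/2)
    have he : (fun y : ℝ => Real.exp (-(y ^ 2) / 2)) = fun y : ℝ => Real.exp (-(1/2) * y ^ 2) := by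
      funext y; ring_nf
    rw [he, this]
    rw [div_div_eq_mul_div, div_one, mul_comm]
  have hs : 0 < Real.sqrt (2 * Real.pi) := Real.sqrt_pos.2 (by positivity)
  unfold stdNormalCDF
  rw [inv_mul_le_iff₀ hs, mul_one, ← h2]
  exact h1

/-- Key identity `S φ(d1) = K φ(d2)`. -/
lemma gauss_identity (S K v L : ℝ) (hS : 0 < S) (hK : 0 < K) (hv : 0 < v)
    (hL : L = Real.log (S / K)) :
    S * gaussPDF ((L + v ^ 2 / 2) / v) = K * gaussPDF ((L + v ^ 2 / 2) / v - v) := by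
  set d1 := (L + v ^ 2 / 2) / v with hd1
  have hd : d1 ^ 2 - (d1 - v) ^ 2 = 2 * L := by
    have h1 : d1 * v = L + v ^ 2 / 2 := by
      rw [hd1]; field_simp
    nlinarith [h1]
  unfold gaussPDF
  have hexp : Real.exp (-(d1 - v) ^ 2 / 2) = Real.exp L * Real.exp (-(d1 ^ 2) / 2) := by
    rw [← Real.exp_add]; congr 1; nlinarith [hd]
  rw [hexp, hL, Real.exp_log (div_pos hS hK)]
  field_simp

lemma bsCall_hasDerivAt_sigma (S K τ : ℝ) (hS : 0 < S) (hK : 0 < K) (hτ : 0 < τ)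
    (σ : ℝ) (hσ : 0 < σ) :
    HasDerivAt (fun s => bsCall S K τ s)
      (K * gaussPDF ((Real.log (S / K) + σ ^ 2 * τ / 2) / (σ * Real.sqrt τ) - σ * Real.sqrt τ)
        * Real.sqrt τ) σ := by
  set L := Real.log (S / K) with hL
  set v := Real.sqrt τ with hv
  have hvpos : 0 < v := Real.sqrt_pos.2 hτ
  have hv2 : v ^ 2 = τ := Real.sq_sqrt hτ.le
  set A : ℝ := (σ ^ 2 * τ / 2 - L) / (σ ^ 2 * v) with hA
  -- derivative of d1
  have hD1 : HasDerivAt (fun s => (L + s ^ 2 * τ / 2) / (s * v)) A σ := by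
    have hn : HasDerivAt (fun s : ℝ => L + s ^ 2 * τ / 2) (σ * τ) σ := by
      have h := ((hasDerivAt_pow 2 σ).const_mul (τ / 2)).const_add L
      convert h using 1
      · rfl
      · rfl
      · funext s; ring
      · norm_num; ring
    have hm : HasDerivAt (fun s : ℝ => s * v) v σ := by
      simpa using (hasDerivAt_id σ).mul_const v
    have hne : σ * v ≠ 0 := by positivity
    have := hn.div hm hne
    convert this using 1
    · rfl
    · rfl
    · rfl
    rw [hA]; field_simp; ring
  have hD2 : HasDerivAt (fun s => (L + s ^ 2 * τ / 2) / (s * v) - s * v) (A - v) σ :=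
    hD1.sub (by simpa using (hasDerivAt_id σ).mul_const v)
  set d1 : ℝ := (L + σ ^ 2 * τ / 2) / (σ * v) with hd1
  have h1 : HasDerivAt (fun s => S * stdNormalCDF ((L + s ^ 2 * τ / 2) / (s * v)))
      (S * (gaussPDF d1 * A)) σ :=
    (((hasDerivAt_stdNormalCDF _).comp σ hD1)).const_mul S
  have h2 : HasDerivAt (fun s => K * stdNormalCDF ((L + s ^ 2 * τ / 2) / (s * v) - s * v))
      (K * (gaussPDF (d1 - σ * v) * (A - v))) σ :=
    (((hasDerivAt_stdNormalCDF _).comp σ hD2)).const_mul K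
  have key : S * gaussPDF d1 = K * gaussPDF (d1 - σ * v) := by
    have hvv : 0 < σ * v := by positivity
    have := gauss_identity S K (σ * v) L hS hK hvv hL
    have harg : (L + (σ * v) ^ 2 / 2) / (σ * v) = d1 := by
      rw [hd1]; congr 1; rw [← hv2]; ring
    rwa [harg] at this
  have hsum : HasDerivAt (fun s => S * stdNormalCDF ((L + s ^ 2 * τ / 2) / (s * v))
      - K * stdNormalCDF ((L + s ^ 2 * τ / 2) / (s * v) - s * v))
      (K * gaussPDF (d1 - σ * v) * v) σ := by
    have := h1.sub h2
    convert this using 1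
    · rfl
    · rfl
    · rfl
    calc K * gaussPDF (d1 - σ * v) * v
        = (K * gaussPDF (d1 - σ * v)) * A - K * (gaussPDF (d1 - σ * v) * (A - v)) := by ring
      _ = S * (gaussPDF d1 * A) - K * (gaussPDF (d1 - σ * v) * (A - v)) := by rw [← key]; ring_nf
  exact hsum

lemma bsCall_mono_sigma (S K τ : ℝ) (hS : 0 < S) (hK : 0 < K) (hτ : 0 < τ)
    {σa σb : ℝ} (ha : 0 < σa) (hab : σa ≤ σb) :
    bsCall S K τ σa ≤ bsCall S K τ σb := by
  have H : MonotoneOn (fun s => bsCall S K τ s) (Ici σa) := by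
    apply monotoneOn_of_deriv_nonneg (convex_Ici σa)
    · intro x hx
      exact (bsCall_hasDerivAt_sigma S K τ hS hK hτ x (ha.trans_le hx)).continuousAt.continuousWithinAt
    · intro x hx
      rw [interior_Ici] at hx
      exact (bsCall_hasDerivAt_sigma S K τ hS hK hτ x (ha.trans hx)).differentiableAt.differentiableWithinAt
    · intro x hx
      rw [interior_Ici] at hx
      rw [(bsCall_hasDerivAt_sigma S K τ hS hK hτ x (ha.trans hx)).deriv]
      have := gaussPDF_pos ((Real.log (S / K) + x ^ 2 * τ / 2) / (x * Real.sqrt τ) - x * Real.sqrt τ)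
      positivity
  exact H self_mem_Ici hab hab

lemma bsCall_hasDerivAt_spot (K τ σ : ℝ) (hK : 0 < K) (hτ : 0 < τ) (hσ : 0 < σ)
    (S : ℝ) (hS : 0 < S) :
    HasDerivAt (fun s => bsCall s K τ σ)
      (stdNormalCDF ((Real.log (S / K) + σ ^ 2 * τ / 2) / (σ * Real.sqrt τ))) S := by
  set v := σ * Real.sqrt τ with hv
  have hvpos : 0 < v := by have := Real.sqrt_pos.2 hτ; positivity
  set a := σ ^ 2 * τ / 2 with ha
  set g : ℝ → ℝ := fun s => (Real.log s - Real.log K + a) / v with hg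
  have hgS : g S = (Real.log (S / K) + a) / v := by
    rw [hg, Real.log_div (ne_of_gt hS) (ne_of_gt hK)]
  have hDg : HasDerivAt g (S⁻¹ / v) S := by
    exact (((Real.hasDerivAt_log (ne_of_gt hS)).sub_const (Real.log K)).add_const a).div_const v
  have h1 : HasDerivAt (fun s => s * stdNormalCDF (g s))
      (1 * stdNormalCDF (g S) + S * (gaussPDF (g S) * (S⁻¹ / v))) S :=
    (hasDerivAt_id S).mul ((hasDerivAt_stdNormalCDF (g S)).comp S hDg)
  have h2 : HasDerivAt (fun s => K * stdNormalCDF (g s - v))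
      (K * (gaussPDF (g S - v) * (S⁻¹ / v))) S :=
    ((hasDerivAt_stdNormalCDF _).comp S (hDg.sub_const v)).const_mul K
  have key : S * gaussPDF (g S) = K * gaussPDF (g S - v) := by
    have hid := gauss_identity S K v (Real.log (S / K)) hS hK hvpos rfl
    have harg : (Real.log (S / K) + v ^ 2 / 2) / v = g S := by
      rw [hgS]; congr 2
      rw [hv, mul_pow, Real.sq_sqrt hτ.le, ha]
    rwa [harg] at hid
  have hsum : HasDerivAt (fun s => s * stdNormalCDF (g s) - K * stdNormalCDF (g s - v))
      (stdNormalCDF (g S)) S := by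
    have h3 := h1.sub h2
    convert h3 using 1
    · rfl
    · rfl
    · rfl
    calc stdNormalCDF (g S)
        = 1 * stdNormalCDF (g S) + (S * gaussPDF (g S)) * (S⁻¹ / v)
          - K * (gaussPDF (g S - v) * (S⁻¹ / v)) := by rw [key]; ring
      _ = 1 * stdNormalCDF (g S) + S * (gaussPDF (g S) * (S⁻¹ / v))
          - K * (gaussPDF (g S - v) * (S⁻¹ / v)) := by ring
  have heq : (fun s => bsCall s K τ σ) =ᶠ[nhds S]
      (fun s => s * stdNormalCDF (g s) - K * stdNormalCDF (g s - v)) := by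
    filter_upwards [eventually_gt_nhds hS] with s hs
    unfold bsCall
    rw [hg]
    simp only []
    rw [Real.log_div (ne_of_gt hs) (ne_of_gt hK)]
  rw [← hgS] at *
  exact (hsum.congr_of_eventuallyEq heq)

lemma bsCall_mono_spot (K τ σ : ℝ) (hK : 0 < K) (hτ : 0 < τ) (hσ : 0 < σ)
    {U S : ℝ} (hU : 0 < U) (hUS : U ≤ S) :
    bsCall U K τ σ ≤ bsCall S K τ σ := by
  have H : MonotoneOn (fun s => bsCall s K τ σ) (Ici U) := by
    apply monotoneOn_of_deriv_nonneg (convex_Ici U)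
    · intro x hx
      exact (bsCall_hasDerivAt_spot K τ σ hK hτ hσ x (hU.trans_le hx)).continuousAt.continuousWithinAt
    · intro x hx
      rw [interior_Ici] at hx
      exact (bsCall_hasDerivAt_spot K τ σ hK hτ hσ x (hU.trans hx)).differentiableAt.differentiableWithinAt
    · intro x hx
      rw [interior_Ici] at hx
      rw [(bsCall_hasDerivAt_spot K τ σ hK hτ hσ x (hU.trans hx)).deriv]
      exact stdNormalCDF_nonneg _
  exact H self_mem_Ici hUS hUS

lemma bsPut_anti_spot (K τ σ : ℝ) (hK : 0 < K) (hτ : 0 < τ) (hσ : 0 < σ)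
    {U S : ℝ} (hU : 0 < U) (hUS : U ≤ S) :
    bsPut S K τ σ ≤ bsPut U K τ σ := by
  have H : AntitoneOn (fun s => bsPut s K τ σ) (Ici U) := by
    have hd : ∀ x : ℝ, 0 < x → HasDerivAt (fun s => bsPut s K τ σ)
        (stdNormalCDF ((Real.log (x / K) + σ ^ 2 * τ / 2) / (σ * Real.sqrt τ)) - 1) x := by
      intro x hx
      unfold bsPut
      exact ((bsCall_hasDerivAt_spot K τ σ hK hτ hσ x hx).sub (hasDerivAt_id x)).add_const K
    apply antitoneOn_of_deriv_nonpos (convex_Ici U)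
    · intro x hx
      exact (hd x (hU.trans_le hx)).continuousAt.continuousWithinAt
    · intro x hx
      rw [interior_Ici] at hx
      exact (hd x (hU.trans hx)).differentiableAt.differentiableWithinAt
    · intro x hx
      rw [interior_Ici] at hx
      rw [(hd x (hU.trans hx)).deriv]
      have := stdNormalCDF_le_one ((Real.log (x / K) + σ ^ 2 * τ / 2) / (σ * Real.sqrt τ))
      linarith
  exact H self_mem_Ici hUS hUS

lemma bsCall_scale (S K τ σ c : ℝ) (hc : 0 ≤ c) :
    bsCall S K τ (c * σ) = bsCall S K (c ^ 2 * τ) σ := by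
  unfold bsCall
  have h : Real.sqrt (c ^ 2 * τ) = c * Real.sqrt τ := by
    rw [Real.sqrt_mul (sq_nonneg c), Real.sqrt_sq hc]
  rw [h]
  ring_nf

lemma pclvgD_pos {σ1 σ2 U τ : ℝ} (h1 : 0 < σ1) (h2 : 0 < σ2) (hU : 0 < U) (hτ : 0 < τ) :
    0 < pclvgD σ1 σ2 U τ := by
  unfold pclvgD
  set e := Real.exp (-2 * U / (σ1 * τ)) with he
  have he0 : 0 < e := Real.exp_pos _
  have he1 : e < 1 := by
    rw [he, Real.exp_lt_one_iff]
    apply div_neg_of_neg_of_pos (by linarith) (by positivity)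
  have hs1 : 0 < 1 / σ1 := by positivity
  have hs2 : 0 < 1 / σ2 := by positivity
  rcases le_or_gt (1 / σ2 - 1 / σ1) 0 with h | h
  · nlinarith
  · nlinarith

lemma pclvg_gap {σ1 σ2 U Ki Kj τ : ℝ} (h1 : 0 < σ1) (h2 : 0 < σ2)
    (hKi : 0 < Ki) (hiU : Ki < U) (hUj : U < Kj)
    (hj : Kj ≤ U + (U - Ki) * σ2 / σ1) (hτ : 0 < τ) :
    pclvgPut σ1 σ2 U Ki τ < pclvgCall σ1 σ2 U Kj τ := by
  have hU : 0 < U := hKi.trans hiU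
  have hD := pclvgD_pos h1 h2 hU hτ
  unfold pclvgPut pclvgCall
  rw [if_pos hiU, if_neg (not_lt.2 hUj.le)]
  set e1 := Real.exp (-(U - Ki) / (σ1 * τ)) with he1
  set e2 := Real.exp (-(Kj - U) / (σ2 * τ)) with he2
  set f1 := Real.exp (-2 * Ki / (σ1 * τ)) with hf1
  set f2 := Real.exp (-2 * U / (σ1 * τ)) with hf2
  have he1p : 0 < e1 := Real.exp_pos _
  have he2p : 0 < e2 := Real.exp_pos _
  have hf2p : 0 < f2 := Real.exp_pos _
  have hf1lt : f1 < 1 := by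
    rw [hf1, Real.exp_lt_one_iff]
    apply div_neg_of_neg_of_pos (by linarith) (by positivity)
  have hj' : (Kj - U) * σ1 ≤ (U - Ki) * σ2 := by
    have := hj
    rw [← sub_le_iff_le_add'] at this
    rw [← le_div_iff₀ h1] at *
    linarith [this]
  have he12 : e1 ≤ e2 := by
    rw [he1, he2, Real.exp_le_exp, neg_div, neg_div, neg_le_neg_iff]
    rw [div_le_div_iff₀ (by positivity) (by positivity)]
    nlinarith [hτ, hj']
  have hff : f2 < f1 := by
    rw [hf2, hf1, Real.exp_lt_exp]
    rw [div_lt_div_iff_of_pos_right (by positivity)]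
    linarith
  have key : e1 * (1 - f1) < e2 * (1 - f2) := by nlinarith
  have hnum : τ * e1 * (1 - f1) < τ * e2 * (1 - f2) := by nlinarith
  have hdiv : τ * e1 * (1 - f1) / pclvgD σ1 σ2 U τ < τ * e2 * (1 - f2) / pclvgD σ1 σ2 U τ := by
    exact (div_lt_div_iff_of_pos_right hD).2 hnum
  linarith

/-- First defining property of the RTIS portfolio (Proposition 5.1 of the
paper): under lower beliefs generated by a PCLVG dominating surface, with the spot at or above
the barrier, the risk reversal long a call struck at `K_{j̲}` and short a put struck at `K_i`
has a strictly positive price for all maturities up to `T`. -/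
theorem rtis_positive_price (n : ℕ) (K : Fin n → ℝ)
    (hKpos : ∀ j, 0 < K j) (hKmono : StrictMono K)
    (U : ℝ) (hU : 0 < U)
    (σs1 σs2 : ℝ) (h1 : 0 < σs1) (h2 : 0 < σs2)
    (IVstar : ℝ → ℝ → ℝ)
    (hIVstar : ∀ K' τ : ℝ, 0 < K' → 0 < τ → 0 < IVstar K' τ ∧
      bsCall U K' τ (IVstar K' τ) = pclvgCall σs1 σs2 U K' τ)
    (i jlo : Fin n) (hi : K i < U)
    (hjlo1 : U < K jlo) (hjlo2 : K jlo ≤ U + (U - K i) * σs2 / σs1)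
    (hjlo3 : ∀ j, U < K j → K j ≤ U + (U - K i) * σs2 / σs1 → K j ≤ K jlo)
    (T : ℝ) (hT : 0 < T) (S : ℝ) (hSU : U ≤ S)
    (IV : Fin n → ℝ → ℝ) (hIVpos : ∀ j τ, 0 < τ → τ ≤ T → 0 < IV j τ)
    (hbeliefs : ∃ c : ℝ, 0 < c ∧ ∀ τ : ℝ, 0 < τ → τ ≤ T →
      (∀ i', K i' < U → IV i' τ ≤ c * IVstar (K i') (c ^ 2 * τ)) ∧
      (∀ j, U < K j → c * IVstar (K j) (c ^ 2 * τ) ≤ IV j τ)) :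
    ∀ τ : ℝ, 0 < τ → τ ≤ T →
      0 < bsCall S (K jlo) τ (IV jlo τ) - bsPut S (K i) τ (IV i τ) := by
  obtain ⟨c, hc, hbel⟩ := hbeliefs
  intro τ hτ0 hτT
  obtain ⟨hlow, hhigh⟩ := hbel τ hτ0 hτT
  have hSpos : 0 < S := hU.trans_le hSU
  have hKi : 0 < K i := hKpos i
  have hKj : 0 < K jlo := hKpos jlo
  set τ' := c ^ 2 * τ with hτ'def
  have hτ' : 0 < τ' := by positivity
  obtain ⟨hIVj_pos, hIVj_eq⟩ := hIVstar (K jlo) τ' hKj hτ'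
  obtain ⟨hIVi_pos, hIVi_eq⟩ := hIVstar (K i) τ' hKi hτ'
  have hcIVj : 0 < c * IVstar (K jlo) τ' := mul_pos hc hIVj_pos
  have hcIVi : 0 < c * IVstar (K i) τ' := mul_pos hc hIVi_pos
  -- Call side
  have A1 : bsCall S (K jlo) τ (c * IVstar (K jlo) τ') ≤ bsCall S (K jlo) τ (IV jlo τ) :=
    bsCall_mono_sigma S (K jlo) τ hSpos hKj hτ0 hcIVj (hhigh jlo hjlo1)
  have A2 : bsCall U (K jlo) τ (c * IVstar (K jlo) τ') ≤
      bsCall S (K jlo) τ (c * IVstar (K jlo) τ') :=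
    bsCall_mono_spot (K jlo) τ _ hKj hτ0 hcIVj hU hSU
  have A3 : bsCall U (K jlo) τ (c * IVstar (K jlo) τ') = pclvgCall σs1 σs2 U (K jlo) τ' := by
    rw [bsCall_scale U (K jlo) τ _ c hc.le, ← hτ'def, hIVj_eq]
  -- Put side
  have B1 : bsPut S (K i) τ (IV i τ) ≤ bsPut S (K i) τ (c * IVstar (K i) τ') := by
    unfold bsPut
    have := bsCall_mono_sigma S (K i) τ hSpos hKi hτ0 (hIVpos i τ hτ0 hτT) (hlow i hi)
    linarith
  have B2 : bsPut S (K i) τ (c * IVstar (K i) τ') ≤ bsPut U (K i) τ (c * IVstar (K i) τ') :=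
    bsPut_anti_spot (K i) τ _ hKi hτ0 hcIVi hU hSU
  have B3 : bsPut U (K i) τ (c * IVstar (K i) τ') = pclvgPut σs1 σs2 U (K i) τ' := by
    unfold bsPut pclvgPut
    rw [bsCall_scale U (K i) τ _ c hc.le, ← hτ'def, hIVi_eq]
    ring
  have gap : pclvgPut σs1 σs2 U (K i) τ' < pclvgCall σs1 σs2 U (K jlo) τ' :=
    pclvg_gap h1 h2 hKi hi hjlo1 hjlo2 hτ'
  linarith
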